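/- Let f : [0,∞) → ℝ be concave, non-decreasing and satisfy f(0) = 0. Then for every X ∈ ℝ^{m×n} and every k ≥ rank(X), R(X) = min { R̃(B,C) : B ∈ ℝ^{m×k}, C ∈ ℝ^{n×k}, BCᵀ = X }, and the minimum is attained. -/

import Mathlib

noncomputable section
open Matrix Real

theorem Matrix.isHermitian_transpose_mul_self {m n : Type*} [Fintype m] (A : Matrix m n ℝ) :
    (Aᵀ * A).IsHermitian := by
  rw [Matrix.IsHermitian, Matrix.conjTranspose_eq_transpose_of_trivial, Matrix.transpose_mul,
    Matrix.transpose_transpose]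

/-- The singular values of a real `m × n` matrix, in descending order,
indexed by `Fin (min m n)`: square roots of the eigenvalues of `Xᴴ * X`. -/
def sVal {m n : ℕ} (X : Matrix (Fin m) (Fin n) ℝ) (i : Fin (min m n)) : ℝ :=
  Real.sqrt ((Matrix.isHermitian_transpose_mul_self X).eigenvalues
    (Tuple.sort (fun j => -(Matrix.isHermitian_transpose_mul_self X).eigenvalues j)
      (Fin.castLE (Nat.min_le_right m n) i)))

def regR {m n : ℕ} (f : ℝ → ℝ) (X : Matrix (Fin m) (Fin n) ℝ) : ℝ :=
  ∑ i, f (sVal X i)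

def colNormSq {m k : ℕ} (B : Matrix (Fin m) (Fin k) ℝ) (i : Fin k) : ℝ :=
  ∑ j, (B j i) ^ 2

def colNorm {m k : ℕ} (B : Matrix (Fin m) (Fin k) ℝ) (i : Fin k) : ℝ :=
  Real.sqrt (colNormSq B i)

def Rt {m n k : ℕ} (f : ℝ → ℝ) (B : Matrix (Fin m) (Fin k) ℝ)
    (C : Matrix (Fin n) (Fin k) ℝ) : ℝ :=
  ∑ i, f ((colNormSq B i + colNormSq C i) / 2)

/-- Frobenius inner product `⟨X,Y⟩ = tr(XᵀY)`. -/
def frobInner {m n : ℕ} (X Y : Matrix (Fin m) (Fin n) ℝ) : ℝ :=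
  (Xᵀ * Y).trace

def frobSq {m n : ℕ} (X : Matrix (Fin m) (Fin n) ℝ) : ℝ :=
  (Xᵀ * X).trace

def fmu (μ x : ℝ) : ℝ := μ - max (Real.sqrt μ - x) 0 ^ 2


section AuxiliaryLemmas
open Finset

lemma concave_slope {f : ℝ → ℝ} (hconc : ConcaveOn ℝ (Set.Ici 0) f)
    {x y z w : ℝ} (hx : 0 ≤ x) (hxy : x < y) (hyz : y ≤ z) (hzw : z < w) :
    (f w - f z) * (y - x) ≤ (f y - f x) * (w - z) := by
  have three : ∀ a b c : ℝ, 0 ≤ a → a < b → b < c →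
      (f c - f b) * (b - a) ≤ (f b - f a) * (c - b) := by
    intro a b c ha hab hbc
    have h1 : (0:ℝ) < c - a := by linarith
    have w1 : (0:ℝ) ≤ (c - b)/(c - a) := div_nonneg (by linarith) h1.le
    have w2 : (0:ℝ) ≤ (b - a)/(c - a) := div_nonneg (by linarith) h1.le
    have w3 : (c - b)/(c - a) + (b - a)/(c - a) = 1 := by field_simp; ring
    have key := hconc.2 (Set.mem_Ici.2 ha) (Set.mem_Ici.2 (by linarith : (0:ℝ) ≤ c)) w1 w2 w3
    have hb : ((c - b)/(c-a)) • a + ((b - a)/(c-a)) • c = b := by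
      have hne : c - a ≠ 0 := ne_of_gt h1
      simp only [smul_eq_mul]
      rw [div_mul_eq_mul_div, div_mul_eq_mul_div, ← add_div, div_eq_iff hne]; ring
    rw [hb] at key
    simp only [smul_eq_mul] at key
    have key2 := mul_le_mul_of_nonneg_right key h1.le
    have key' : (c - b) * f a + (b - a) * f c ≤ f b * (c - a) := by
      have hne : c - a ≠ 0 := ne_of_gt h1
      field_simp at key2
      nlinarith [key2]
    nlinarith [key']
  rcases eq_or_lt_of_le hyz with rfl | hyz'
  · exact three x y w hx hxy hzw
  · have h1 := three x y z hx hxy hyz'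
    have h2 := three y z w (by linarith) hyz' hzw
    have hyx : (0:ℝ) < y - x := by linarith
    have hzy : (0:ℝ) < z - y := by linarith
    have hwz : (0:ℝ) < w - z := by linarith
    nlinarith [mul_le_mul_of_nonneg_right h2 hyx.le, mul_le_mul_of_nonneg_right h1 hwz.le]

lemma step2core {ι κ : Type*} [Fintype ι] [Fintype κ] :
    ∀ (N : ℕ) (W : Finset ℝ), W.card ≤ N → (∀ x ∈ W, 0 < x) → ∀ (f : ℝ → ℝ), f 0 = 0 →
    (∀ x ∈ insert (0:ℝ) W, ∀ y ∈ insert (0:ℝ) W, x ≤ y → f x ≤ f y) →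
    (∀ x y z w : ℝ, x ∈ insert (0:ℝ) W → y ∈ insert (0:ℝ) W → z ∈ insert (0:ℝ) W →
      w ∈ insert (0:ℝ) W →
      x < y → y ≤ z → z < w → (f w - f z) * (y - x) ≤ (f y - f x) * (w - z)) →
    ∀ (s : ι → ℝ) (e : κ → ℝ), (∀ i, s i ∈ insert (0:ℝ) W) → (∀ j, e j ∈ insert (0:ℝ) W) →
    (∀ t, 0 ≤ t → ∑ i, min (s i) t ≤ ∑ j, min (e j) t) →
    ∑ i, f (s i) ≤ ∑ j, f (e j) := by
  intro N
  induction N with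
  | zero =>
    intro W hcard _ f hf0 _ _ s e hs he _
    have hW : W = ∅ := Finset.card_eq_zero.mp (Nat.le_zero.mp hcard)
    subst hW
    have hs0 : ∀ i, s i = 0 := fun i => by simpa using hs i
    have he0 : ∀ j, e j = 0 := fun j => by simpa using he j
    simp [hs0, he0, hf0]
  | succ N ih =>
    intro W hcard hWpos f hf0 hmono hslope s e hs he hmin
    rcases W.eq_empty_or_nonempty with rfl | hne
    · have hs0 : ∀ i, s i = 0 := fun i => by simpa using hs i
      have he0 : ∀ j, e j = 0 := fun j => by simpa using he j
      simp [hs0, he0, hf0]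
    · set T := W.max' hne with hT
      have hTW : T ∈ W := W.max'_mem hne
      have hTpos : 0 < T := hWpos T hTW
      set W' := W.erase T with hW'
      have hW'sub : W' ⊆ W := Finset.erase_subset _ _
      have hW'card : W'.card ≤ N := by
        rw [hW', Finset.card_erase_of_mem hTW]
        have := Finset.card_pos.mpr hne
        omega
      have hins : insert (0:ℝ) W' ⊆ insert (0:ℝ) W :=
        Finset.insert_subset_insert _ hW'sub
      have hne' : (insert (0:ℝ) W').Nonempty := Finset.insert_nonempty _ _
      set t := (insert (0:ℝ) W').max' hne' with htdef
      have ht_mem : t ∈ insert (0:ℝ) W' := Finset.max'_mem _ hne'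
      have ht_nonneg : (0:ℝ) ≤ t := Finset.le_max' _ _ (Finset.mem_insert_self _ _)
      have ht_lt : t < T := by
        rcases Finset.mem_insert.mp ht_mem with h0 | hW'mem
        · rw [h0]; exact hTpos
        · exact lt_of_le_of_ne (W.le_max' t (hW'sub hW'mem)) (Finset.ne_of_mem_erase hW'mem)
      have hle_t : ∀ x ∈ insert (0:ℝ) W, x ≠ T → x ≤ t := by
        intro x hx hxT
        rcases Finset.mem_insert.mp hx with h0 | hxW
        · rw [h0] at *; exact ht_nonneg
        · exact Finset.le_max' _ _ (Finset.mem_insert_of_mem (Finset.mem_erase.mpr ⟨hxT, hxW⟩))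
      have hle_T : ∀ x ∈ insert (0:ℝ) W, x ≤ T := by
        intro x hx
        rcases Finset.mem_insert.mp hx with h0 | hxW
        · rw [h0]; exact hTpos.le
        · exact W.le_max' x hxW
      have hTmem : T ∈ insert (0:ℝ) W := Finset.mem_insert_of_mem hTW
      have htmem : t ∈ insert (0:ℝ) W := hins ht_mem
      set k := (f T - f t)/(T - t) with hkdef
      have hTt : (0:ℝ) < T - t := by linarith
      have hk0 : 0 ≤ k := div_nonneg (by
        have := hmono t htmem T hTmem ht_lt.le; linarith) hTt.le
      have hkey : f T - f t = k * (T - t) := by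
        rw [hkdef]; field_simp
      set h : ℝ → ℝ := fun x => f x - k * x with hhdef
      -- per-point: h x = h (min x t) for x in insert 0 W
      have hcollapse : ∀ x ∈ insert (0:ℝ) W, h x = h (min x t) := by
        intro x hx
        rcases le_or_gt x t with hxt | htx
        · rw [min_eq_left hxt]
        · have hxT : x = T := by
            by_contra hne2
            exact absurd (hle_t x hx hne2) (not_le.mpr htx)
          rw [min_eq_right (by rw [hxT]; exact ht_lt.le)]
          rw [hxT]; simp only [hhdef]; nlinarith [hkey]
      -- IH application
      have hmono' : ∀ x ∈ insert (0:ℝ) W', ∀ y ∈ insert (0:ℝ) W', x ≤ y → h x ≤ h y := by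
        intro x hx y hy hxy
        rcases eq_or_lt_of_le hxy with rfl | hlt
        · exact le_rfl
        · have hyt : y ≤ t := Finset.le_max' _ _ hy
          have hsl := hslope x y t T (hins hx) (hins hy) htmem hTmem hlt hyt ht_lt
          have hky : k * (y - x) ≤ f y - f x := by
            rw [hkdef, div_mul_eq_mul_div, div_le_iff₀ hTt]
            linarith [hsl]
          simp only [hhdef]
          nlinarith [hky]
      have hslope' : ∀ x y z w : ℝ, x ∈ insert (0:ℝ) W' → y ∈ insert (0:ℝ) W' →
          z ∈ insert (0:ℝ) W' → w ∈ insert (0:ℝ) W' →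
          x < y → y ≤ z → z < w → (h w - h z) * (y - x) ≤ (h y - h x) * (w - z) := by
        intro x y z w hx hy hz hw h1 h2 h3
        have hsl := hslope x y z w (hins hx) (hins hy) (hins hz) (hins hw) h1 h2 h3
        simp only [hhdef]
        nlinarith [hsl]
      have hh0 : h 0 = 0 := by simp [hhdef, hf0]
      -- new families
      have hs' : ∀ i, min (s i) t ∈ insert (0:ℝ) W' := by
        intro i
        rcases le_or_gt (s i) t with hst | hts
        · rw [min_eq_left hst]
          rcases Finset.mem_insert.mp (hs i) with h0 | hW
          · rw [h0]; exact Finset.mem_insert_self _ _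
          · exact Finset.mem_insert_of_mem (Finset.mem_erase.mpr
              ⟨by intro hEq; rw [hEq] at hst; linarith, hW⟩)
        · rw [min_eq_right hts.le]; exact ht_mem
      have he' : ∀ j, min (e j) t ∈ insert (0:ℝ) W' := by
        intro j
        rcases le_or_gt (e j) t with hst | hts
        · rw [min_eq_left hst]
          rcases Finset.mem_insert.mp (he j) with h0 | hW
          · rw [h0]; exact Finset.mem_insert_self _ _
          · exact Finset.mem_insert_of_mem (Finset.mem_erase.mpr
              ⟨by intro hEq; rw [hEq] at hst; linarith, hW⟩)
        · rw [min_eq_right hts.le]; exact ht_mem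
      have hmin' : ∀ u, 0 ≤ u → ∑ i, min (min (s i) t) u ≤ ∑ j, min (min (e j) t) u := by
        intro u hu
        have h1 : ∀ i, min (min (s i) t) u = min (s i) (min t u) := fun i => min_assoc _ _ _
        have h2 : ∀ j, min (min (e j) t) u = min (e j) (min t u) := fun j => min_assoc _ _ _
        simp only [h1, h2]
        exact hmin (min t u) (le_min ht_nonneg hu)
      have ihc := ih W' hW'card (fun x hx => hWpos x (hW'sub hx)) h hh0 hmono' hslope'
        (fun i => min (s i) t) (fun j => min (e j) t) hs' he' hmin'
      -- collapse
      have hcs : ∀ i, h (min (s i) t) = h (s i) := fun i => (hcollapse _ (hs i)).symm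
      have hce : ∀ j, h (min (e j) t) = h (e j) := fun j => (hcollapse _ (he j)).symm
      simp only [hcs, hce] at ihc
      -- total sums
      have htot : ∑ i, s i ≤ ∑ j, e j := by
        have := hmin T hTpos.le
        have h1 : ∀ i, min (s i) T = s i := fun i => min_eq_left (hle_T _ (hs i))
        have h2 : ∀ j, min (e j) T = e j := fun j => min_eq_left (hle_T _ (he j))
        simp only [h1, h2] at this
        exact this
      have expand_s : ∑ i, f (s i) = ∑ i, h (s i) + k * ∑ i, s i := by
        simp only [hhdef]
        rw [Finset.mul_sum, ← Finset.sum_add_distrib]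
        congr 1; funext i; ring
      have expand_e : ∑ j, f (e j) = ∑ j, h (e j) + k * ∑ j, e j := by
        simp only [hhdef]
        rw [Finset.mul_sum, ← Finset.sum_add_distrib]
        congr 1; funext j; ring
      rw [expand_s, expand_e]
      have := mul_le_mul_of_nonneg_left htot hk0
      linarith [ihc]

namespace SVDAux

lemma ker_onb {m n : ℕ} (Z : Matrix (Fin m) (Fin n) ℝ) :
    ∃ (l : ℕ) (qb : Fin l → (Fin n → ℝ)),
      l + Z.rank = n ∧
      (∀ c, Z *ᵥ qb c = 0) ∧
      (∀ c d, qb c ⬝ᵥ qb d = if c = d then 1 else 0) := by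
  set e := (WithLp.linearEquiv 2 ℝ (Fin n → ℝ)) with he
  set L : EuclideanSpace ℝ (Fin n) →ₗ[ℝ] (Fin m → ℝ) := Z.mulVecLin ∘ₗ e.toLinearMap with hL
  set K := LinearMap.ker L with hK
  have hrange : LinearMap.range L = LinearMap.range Z.mulVecLin := by
    rw [hL, LinearMap.range_comp, LinearEquiv.range, Submodule.map_top]
  have hrn := LinearMap.finrank_range_add_finrank_ker L
  rw [hrange] at hrn
  have hE : Module.finrank ℝ (EuclideanSpace ℝ (Fin n)) = n := by
    simp [finrank_euclideanSpace]
  rw [hE] at hrn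
  have hZrank : Z.rank = Module.finrank ℝ (LinearMap.range Z.mulVecLin) := rfl
  set l := Module.finrank ℝ K with hl
  have hsum : l + Z.rank = n := by omega
  set ob := stdOrthonormalBasis ℝ K with hob
  refine ⟨l, fun c => ((ob c : EuclideanSpace ℝ (Fin n)) : Fin n → ℝ), hsum, ?_, ?_⟩
  · intro c
    have hmem : ((ob c : K) : EuclideanSpace ℝ (Fin n)) ∈ K := (ob c).2
    exact LinearMap.mem_ker.mp hmem
  · intro c d
    have horth := orthonormal_iff_ite.mp ob.orthonormal c d
    have hco : (inner ℝ (ob c) (ob d) : ℝ)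
        = inner ℝ ((ob c : K) : EuclideanSpace ℝ (Fin n)) ((ob d : K) : EuclideanSpace ℝ (Fin n)) :=
      rfl
    rw [hco, EuclideanSpace.inner_eq_star_dotProduct, dotProduct_comm] at horth
    exact horth


lemma sum_dotProduct' {ι α : Type*} [Fintype ι] [Fintype α] (v : ι → α → ℝ) (w : α → ℝ) :
    (∑ i, v i) ⬝ᵥ w = ∑ i, v i ⬝ᵥ w := by
  simp only [dotProduct, Finset.sum_apply, Finset.sum_mul]
  exact Finset.sum_comm

lemma dotProduct_sum' {ι α : Type*} [Fintype ι] [Fintype α] (w : α → ℝ) (v : ι → α → ℝ) :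
    w ⬝ᵥ (∑ i, v i) = ∑ i, w ⬝ᵥ v i := by
  simp only [dotProduct, Finset.sum_apply, Finset.mul_sum]
  exact Finset.sum_comm

lemma dot_ortho_expand {ι α : Type*} [Fintype ι] [Fintype α] (y : ι → α → ℝ)
    (h : ∀ i j, i ≠ j → y i ⬝ᵥ y j = 0) (c d : ι → ℝ) :
    (∑ i, c i • y i) ⬝ᵥ (∑ j, d j • y j) = ∑ i, c i * d i * (y i ⬝ᵥ y i) := by
  rw [sum_dotProduct']
  apply Finset.sum_congr rfl
  intro i _
  rw [smul_dotProduct, dotProduct_sum']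
  rw [Finset.smul_sum]
  rw [Finset.sum_eq_single i]
  · rw [dotProduct_smul]
    simp [smul_eq_mul]; ring
  · intro j _ hji
    rw [dotProduct_smul, h i j (Ne.symm hji)]
    simp
  · intro hi; exact absurd (Finset.mem_univ i) hi

lemma dot_self_nonneg {α : Type*} [Fintype α] (v : α → ℝ) : 0 ≤ v ⬝ᵥ v :=
  Finset.sum_nonneg (fun a _ => mul_self_nonneg _)

lemma bessel {ι α : Type*} [Fintype ι] [Fintype α] (u : ι → α → ℝ) (b : α → ℝ)
    (horth : ∀ i j, i ≠ j → u i ⬝ᵥ u j = 0) (hnorm : ∀ i, u i ⬝ᵥ u i ≤ 1) :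
    ∑ i, (u i ⬝ᵥ b)^2 ≤ b ⬝ᵥ b := by
  set c : ι → ℝ := fun i => u i ⬝ᵥ b with hc
  set S : α → ℝ := ∑ i, c i • u i with hS
  have h0 : 0 ≤ (b - S) ⬝ᵥ (b - S) := dot_self_nonneg _
  have hbS : b ⬝ᵥ S = ∑ i, c i * c i := by
    rw [hS, dotProduct_sum']
    apply Finset.sum_congr rfl
    intro i _
    rw [dotProduct_smul, dotProduct_comm]
    simp [hc, smul_eq_mul]
  have hSb : S ⬝ᵥ b = ∑ i, c i * c i := by
    rw [dotProduct_comm]; exact hbS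
  have hSS : S ⬝ᵥ S = ∑ i, c i * c i * (u i ⬝ᵥ u i) := by
    rw [hS]; exact dot_ortho_expand u horth c c
  have hexp : (b - S) ⬝ᵥ (b - S) =
      b ⬝ᵥ b - 2 * ∑ i, c i * c i + ∑ i, c i * c i * (u i ⬝ᵥ u i) := by
    rw [sub_dotProduct, dotProduct_sub, dotProduct_sub,
      hbS, hSb, hSS]
    ring
  have hterm : ∑ i, c i * c i * (u i ⬝ᵥ u i) ≤ ∑ i, c i * c i := by
    apply Finset.sum_le_sum
    intro i _
    have := mul_le_mul_of_nonneg_left (hnorm i) (mul_self_nonneg (c i))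
    simpa using this
  have hfin : ∑ i, c i * c i ≤ b ⬝ᵥ b := by
    rw [hexp] at h0; linarith
  calc ∑ i, (u i ⬝ᵥ b)^2 = ∑ i, c i * c i := by
        apply Finset.sum_congr rfl; intro i _; rw [hc]; ring
    _ ≤ b ⬝ᵥ b := hfin

lemma linind_of_dot {ι α : Type*} [Fintype ι] [Fintype α] (u : ι → α → ℝ)
    (horth : ∀ i j, i ≠ j → u i ⬝ᵥ u j = 0) (hn : ∀ i, u i ⬝ᵥ u i = 1) :
    LinearIndependent ℝ u := by
  rw [Fintype.linearIndependent_iff]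
  intro g hg i
  have h := congrArg (fun v => v ⬝ᵥ u i) hg
  simp only [zero_dotProduct] at h
  rw [sum_dotProduct'] at h
  rw [Finset.sum_eq_single i] at h
  · rw [smul_dotProduct, hn i] at h
    simpa using h
  · intro j _ hji
    rw [smul_dotProduct, horth j i hji]
    simp
  · intro hi; exact absurd (Finset.mem_univ i) hi


variable {m n : ℕ} (X : Matrix (Fin m) (Fin n) ℝ)

def hermXX : (Xᵀ * X).IsHermitian := Matrix.isHermitian_transpose_mul_self X

def svdPerm : Equiv.Perm (Fin n) :=
  Tuple.sort (fun j => -(hermXX X).eigenvalues j)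

def svdLam (i : Fin n) : ℝ := (hermXX X).eigenvalues (svdPerm X i)

def svdS (i : Fin n) : ℝ := Real.sqrt (svdLam X i)

def svdV (i : Fin n) : Fin n → ℝ := ⇑((hermXX X).eigenvectorBasis (svdPerm X i))

def svdU (i : Fin n) : Fin m → ℝ :=
  if svdS X i = 0 then 0 else (svdS X i)⁻¹ • (X *ᵥ svdV X i)

lemma posSemidefXX : (Xᵀ * X).PosSemidef := by
  have h : Xᵀ = Xᴴ := by
    ext i j; simp [Matrix.conjTranspose_apply]
  rw [h]
  exact Matrix.posSemidef_conjTranspose_mul_self X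

lemma svdLam_nonneg (i : Fin n) : 0 ≤ svdLam X i :=
  (posSemidefXX X).eigenvalues_nonneg _

lemma svdLam_anti : Antitone (svdLam X) := by
  intro i j hij
  have h := Tuple.monotone_sort (fun j => -(hermXX X).eigenvalues j) hij
  simp only [Function.comp_apply] at h
  have : -svdLam X i ≤ -svdLam X j := h
  linarith

lemma svdS_nonneg (i : Fin n) : 0 ≤ svdS X i := Real.sqrt_nonneg _

lemma svdS_sq (i : Fin n) : svdS X i ^ 2 = svdLam X i :=
  Real.sq_sqrt (svdLam_nonneg X i)

lemma svdS_anti : Antitone (svdS X) := fun i j hij =>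
  Real.sqrt_le_sqrt (svdLam_anti X hij)

lemma svdV_dot (i j : Fin n) : svdV X i ⬝ᵥ svdV X j = if i = j then 1 else 0 := by
  have horth := (hermXX X).eigenvectorBasis.orthonormal
  have h := orthonormal_iff_ite.mp horth (svdPerm X i) (svdPerm X j)
  have hd : (inner ℝ ((hermXX X).eigenvectorBasis (svdPerm X i))
      ((hermXX X).eigenvectorBasis (svdPerm X j)) : ℝ)
      = svdV X i ⬝ᵥ svdV X j := by
    rw [EuclideanSpace.inner_eq_star_dotProduct, dotProduct_comm]
    rfl
  rw [hd] at h
  rw [h]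
  simp [Equiv.apply_eq_iff_eq]

lemma A_mulVec_svdV (i : Fin n) :
    (Xᵀ * X) *ᵥ svdV X i = svdLam X i • svdV X i :=
  (hermXX X).mulVec_eigenvectorBasis (svdPerm X i)

lemma dot_XmulVec (x y : Fin n → ℝ) :
    (X *ᵥ x) ⬝ᵥ (X *ᵥ y) = x ⬝ᵥ ((Xᵀ * X) *ᵥ y) := by
  rw [← Matrix.mulVec_mulVec, Matrix.dotProduct_mulVec x Xᵀ, Matrix.vecMul_transpose]

lemma XV_dot (i j : Fin n) :
    (X *ᵥ svdV X i) ⬝ᵥ (X *ᵥ svdV X j) = if i = j then svdLam X i else 0 := by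
  rw [dot_XmulVec, A_mulVec_svdV, dotProduct_smul, svdV_dot]
  by_cases h : i = j
  · subst h; simp
  · simp [h]

lemma svdLam_eq_zero_iff (i : Fin n) : svdS X i = 0 ↔ svdLam X i = 0 := by
  constructor
  · intro h
    have := svdS_sq X i
    rw [h] at this; simpa using this.symm
  · intro h; rw [svdS, h, Real.sqrt_zero]

lemma XV_eq (i : Fin n) : X *ᵥ svdV X i = svdS X i • svdU X i := by
  rw [svdU]
  by_cases h : svdS X i = 0
  · simp only [h, if_pos trivial, if_true]
    have hlam : svdLam X i = 0 := (svdLam_eq_zero_iff X i).mp h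
    have hz : (X *ᵥ svdV X i) ⬝ᵥ (X *ᵥ svdV X i) = 0 := by
      rw [XV_dot]; simp [hlam]
    have := dotProduct_self_eq_zero.mp hz
    rw [this]; simp
  · rw [if_neg h, smul_smul, mul_inv_cancel₀ h, one_smul]

lemma svdU_dot (i j : Fin n) :
    svdU X i ⬝ᵥ svdU X j = if i = j ∧ svdS X i ≠ 0 then 1 else 0 := by
  rw [svdU, svdU]
  by_cases hi : svdS X i = 0
  · simp [hi, zero_dotProduct]
  · by_cases hj : svdS X j = 0
    · have hij : i ≠ j := fun hEq => hi (hEq ▸ hj)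
      simp [hi, hj, hij, dotProduct_zero]
    · rw [if_neg hi, if_neg hj]
      rw [smul_dotProduct, dotProduct_smul, XV_dot]
      by_cases hij : i = j
      · subst hij
        simp only [if_pos rfl, smul_eq_mul]
        have : svdLam X i = svdS X i * svdS X i := by
          rw [← svdS_sq]; ring
        rw [this]
        field_simp
        simp [hi]
      · simp [hij, hi]

lemma svdU_dot_XV (i : Fin n) : svdU X i ⬝ᵥ (X *ᵥ svdV X i) = svdS X i := by
  rw [XV_eq, dotProduct_smul, svdU_dot]
  by_cases h : svdS X i = 0
  · simp [h]
  · simp [h]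


lemma rank_eq_card_lam_ne :
    X.rank = (univ.filter (fun i => svdLam X i ≠ 0)).card := by
  have h1 : (Xᵀ * X).rank = X.rank := Matrix.rank_transpose_mul_self X
  have h2 := (hermXX X).rank_eq_card_non_zero_eigs
  rw [← h1, h2, ← Fintype.card_subtype]
  exact Fintype.card_congr (Equiv.subtypeEquiv (svdPerm X).symm (fun i => by
    simp [svdLam, Equiv.apply_symm_apply]))

lemma svdLam_ne_iff (i : Fin n) : svdLam X i ≠ 0 ↔ (i : ℕ) < X.rank := by
  rw [rank_eq_card_lam_ne]
  set F := univ.filter (fun i => svdLam X i ≠ 0) with hF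
  constructor
  · intro hi
    have hsub : Finset.Iic i ⊆ F := by
      intro j hj
      rw [Finset.mem_Iic] at hj
      rw [hF, Finset.mem_filter]
      refine ⟨Finset.mem_univ _, ?_⟩
      have h1 : svdLam X i ≤ svdLam X j := svdLam_anti X hj
      have h2 : 0 ≤ svdLam X i := svdLam_nonneg X i
      have h3 : 0 < svdLam X i := lt_of_le_of_ne h2 (Ne.symm hi)
      exact ne_of_gt (lt_of_lt_of_le h3 h1)
    have := Finset.card_le_card hsub
    rw [Fin.card_Iic] at this
    omega
  · intro hcard
    by_contra hzero
    have hsub : F ⊆ Finset.Iio i := by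
      intro j hj
      rw [hF, Finset.mem_filter] at hj
      rw [Finset.mem_Iio]
      by_contra hij
      push_neg at hij
      have h1 : svdLam X j ≤ svdLam X i := svdLam_anti X hij
      have h2 : 0 ≤ svdLam X j := svdLam_nonneg X j
      rw [hzero] at h1
      exact hj.2 (le_antisymm h1 h2)
    have := Finset.card_le_card hsub
    rw [Fin.card_Iio] at this
    omega

lemma svdS_eq_zero_of_rank (i : Fin n) (h : X.rank ≤ (i : ℕ)) : svdS X i = 0 := by
  rw [svdLam_eq_zero_iff]
  by_contra hne
  exact absurd ((svdLam_ne_iff X i).mp hne) (not_lt.mpr h)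

lemma svdS_ne_zero_of_lt_rank (i : Fin n) (h : (i : ℕ) < X.rank) : svdS X i ≠ 0 := by
  rw [Ne, svdLam_eq_zero_iff]
  intro hlam
  exact absurd ((svdLam_ne_iff X i).mpr h) (fun hc => hc hlam)

lemma svdV_expand (x : Fin n → ℝ) : ∑ j, (svdV X j ⬝ᵥ x) • svdV X j = x := by
  set Vm : Matrix (Fin n) (Fin n) ℝ := Matrix.of fun i j => svdV X j i with hVm
  have hVtV : Vmᵀ * Vm = 1 := by
    ext i j
    rw [Matrix.mul_apply, Matrix.one_apply]
    have := svdV_dot X i j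
    rw [dotProduct] at this
    simpa [hVm, Matrix.transpose_apply] using this
  have hVVt : Vm * Vmᵀ = 1 := mul_eq_one_comm.mp hVtV
  funext a
  rw [Finset.sum_apply]
  have key : ∑ j, ((svdV X j ⬝ᵥ x) • svdV X j) a = ((Vm * Vmᵀ) *ᵥ x) a := by
    simp only [Pi.smul_apply, smul_eq_mul, Matrix.mulVec, Matrix.mul_apply,
      dotProduct, Matrix.transpose_apply, hVm, Matrix.of_apply]
    simp only [Finset.sum_mul, Finset.mul_sum]
    rw [Finset.sum_comm]
    apply Finset.sum_congr rfl
    intro j _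
    apply Finset.sum_congr rfl
    intro c _
    ring
  rw [key, hVVt, Matrix.one_mulVec]

lemma svd_mulVec (x : Fin n → ℝ) :
    X *ᵥ x = ∑ i, (svdS X i * (svdV X i ⬝ᵥ x)) • svdU X i := by
  conv_lhs => rw [← svdV_expand X x]
  have h1 : X *ᵥ (∑ j, (svdV X j ⬝ᵥ x) • svdV X j)
      = ∑ j, (svdV X j ⬝ᵥ x) • (X *ᵥ svdV X j) := by
    rw [show ∀ y, X *ᵥ y = X.mulVecLin y from fun y => rfl]
    rw [map_sum]
    apply Finset.sum_congr rfl
    intro j _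
    rw [LinearMap.map_smul]
    rfl
  rw [h1]
  apply Finset.sum_congr rfl
  intro j _
  rw [XV_eq, smul_smul, mul_comm]

lemma svd_entry (a : Fin m) (b : Fin n) :
    X a b = ∑ i, svdS X i * svdU X i a * svdV X i b := by
  have h := congrFun (svd_mulVec X (Pi.single b 1)) a
  rw [Matrix.mulVec_single] at h
  simp only [mul_one, Finset.sum_apply, Pi.smul_apply, smul_eq_mul,
    dotProduct_single] at h
  rw [MulOpposite.op_one, one_smul] at h
  rw [show X a b = X.col b a from rfl, h]
  congr 1
  funext i
  ring


-- ## construction of the minimizing factorization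

def consB (k : ℕ) : Matrix (Fin m) (Fin k) ℝ :=
  Matrix.of fun a j =>
    if h : (j : ℕ) < n then Real.sqrt (svdS X ⟨j, h⟩) * svdU X ⟨j, h⟩ a else 0

def consC (k : ℕ) : Matrix (Fin n) (Fin k) ℝ :=
  Matrix.of fun b j =>
    if h : (j : ℕ) < n then Real.sqrt (svdS X ⟨j, h⟩) * svdV X ⟨j, h⟩ b else 0

lemma rank_le_min : X.rank ≤ min m n :=
  le_min (Matrix.rank_le_height X) (Matrix.rank_le_width X)

lemma consB_mul {k : ℕ} (hk : X.rank ≤ k) : consB X k * (consC X k)ᵀ = X := by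
  ext a b
  rw [Matrix.mul_apply]
  set F : ℕ → ℝ := fun j =>
    if h : j < n then svdS X ⟨j, h⟩ * svdU X ⟨j, h⟩ a * svdV X ⟨j, h⟩ b else 0 with hF
  have hFzero : ∀ j, k ≤ j → F j = 0 := by
    intro j hj
    simp only [hF]
    by_cases h : j < n
    · rw [dif_pos h]
      rw [svdS_eq_zero_of_rank X ⟨j, h⟩ (le_trans hk hj)]
      ring
    · rw [dif_neg h]
  have claim1 : ∑ j : Fin k, consB X k a j * (consC X k)ᵀ j b = ∑ j ∈ range k, F j := by
    rw [← Fin.sum_univ_eq_sum_range]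
    apply Finset.sum_congr rfl
    intro j _
    rw [Matrix.transpose_apply]
    simp only [consB, consC, Matrix.of_apply, hF]
    by_cases h : (j : ℕ) < n
    · rw [dif_pos h, dif_pos h, dif_pos h]
      have hs : Real.sqrt (svdS X ⟨j, h⟩) * Real.sqrt (svdS X ⟨j, h⟩) = svdS X ⟨j, h⟩ :=
        Real.mul_self_sqrt (svdS_nonneg X _)
      calc Real.sqrt (svdS X ⟨(j:ℕ), h⟩) * svdU X ⟨(j:ℕ), h⟩ a *
            (Real.sqrt (svdS X ⟨(j:ℕ), h⟩) * svdV X ⟨(j:ℕ), h⟩ b)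
          = (Real.sqrt (svdS X ⟨(j:ℕ), h⟩) * Real.sqrt (svdS X ⟨(j:ℕ), h⟩)) *
            (svdU X ⟨(j:ℕ), h⟩ a * svdV X ⟨(j:ℕ), h⟩ b) := by ring
        _ = svdS X ⟨(j:ℕ), h⟩ * svdU X ⟨(j:ℕ), h⟩ a * svdV X ⟨(j:ℕ), h⟩ b := by
            rw [hs]; ring
    · rw [dif_neg h, dif_neg h, dif_neg h]; ring
  have claim2 : X a b = ∑ j ∈ range n, F j := by
    rw [← Fin.sum_univ_eq_sum_range, svd_entry X a b]
    apply Finset.sum_congr rfl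
    intro j _
    rw [hF]
    simp only []
    rw [dif_pos j.isLt]
  have claim3 : ∑ j ∈ range k, F j = ∑ j ∈ range n, F j := by
    have e1 : ∑ j ∈ range k, F j = ∑ j ∈ range (max k n), F j := by
      apply Finset.sum_subset (Finset.range_subset_range.mpr (le_max_left _ _))
      intro j _ hnot
      rw [Finset.mem_range, not_lt] at hnot
      exact hFzero j hnot
    have e2 : ∑ j ∈ range n, F j = ∑ j ∈ range (max k n), F j := by
      apply Finset.sum_subset (Finset.range_subset_range.mpr (le_max_right _ _))
      intro j _ hnot
      rw [Finset.mem_range, not_lt] at hnot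
      rw [hF]
      exact dif_neg (fun h => absurd h (not_lt.mpr hnot))
    rw [e1, e2]
  rw [claim1, claim3, ← claim2]

lemma consB_colNormSq {k : ℕ} (j : Fin k) :
    colNormSq (consB X k) j = if h : (j : ℕ) < n then svdS X ⟨j, h⟩ else 0 := by
  rw [colNormSq]
  by_cases h : (j : ℕ) < n
  · rw [dif_pos h]
    have : ∀ a, (consB X k a j)^2 = svdS X ⟨j, h⟩ * (svdU X ⟨j, h⟩ a * svdU X ⟨j, h⟩ a) := by
      intro a
      simp only [consB, Matrix.of_apply, dif_pos h]
      have hs : Real.sqrt (svdS X ⟨j, h⟩) ^ 2 = svdS X ⟨j, h⟩ :=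
        Real.sq_sqrt (svdS_nonneg X _)
      rw [mul_pow, hs]; ring
    simp only [this]
    rw [← Finset.mul_sum]
    have hdot := svdU_dot X ⟨j, h⟩ ⟨j, h⟩
    rw [dotProduct] at hdot
    rw [hdot]
    by_cases hz : svdS X ⟨j, h⟩ = 0
    · simp [hz]
    · simp [hz]
  · rw [dif_neg h]
    apply Finset.sum_eq_zero
    intro a _
    simp only [consB, Matrix.of_apply, dif_neg h]
    ring

lemma consC_colNormSq {k : ℕ} (j : Fin k) :
    colNormSq (consC X k) j = if h : (j : ℕ) < n then svdS X ⟨j, h⟩ else 0 := by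
  rw [colNormSq]
  by_cases h : (j : ℕ) < n
  · rw [dif_pos h]
    have : ∀ b, (consC X k b j)^2 = svdS X ⟨j, h⟩ * (svdV X ⟨j, h⟩ b * svdV X ⟨j, h⟩ b) := by
      intro b
      simp only [consC, Matrix.of_apply, dif_pos h]
      have hs : Real.sqrt (svdS X ⟨j, h⟩) ^ 2 = svdS X ⟨j, h⟩ :=
        Real.sq_sqrt (svdS_nonneg X _)
      rw [mul_pow, hs]; ring
    simp only [this]
    rw [← Finset.mul_sum]
    have hdot := svdV_dot X ⟨j, h⟩ ⟨j, h⟩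
    rw [dotProduct] at hdot
    rw [hdot]
    simp
  · rw [dif_neg h]
    apply Finset.sum_eq_zero
    intro b _
    simp only [consC, Matrix.of_apply, dif_neg h]
    ring

lemma cons_Rt {k : ℕ} (hk : X.rank ≤ k) (f : ℝ → ℝ) (hf0 : f 0 = 0) :
    Rt f (consB X k) (consC X k) = regR f X := by
  set G : ℕ → ℝ := fun j => if h : j < n then f (svdS X ⟨j, h⟩) else 0 with hG
  have hGzero : ∀ j, min m n ≤ j ∨ k ≤ j → G j = 0 := by
    intro j hj
    simp only [hG]
    by_cases h : j < n
    · rw [dif_pos h]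
      have hrank : X.rank ≤ j := by
        rcases hj with hj | hj
        · exact le_trans (rank_le_min X) hj
        · exact le_trans hk hj
      rw [svdS_eq_zero_of_rank X ⟨j, h⟩ hrank, hf0]
    · rw [dif_neg h]
  have e1 : Rt f (consB X k) (consC X k) = ∑ j ∈ range k, G j := by
    rw [Rt, ← Fin.sum_univ_eq_sum_range]
    apply Finset.sum_congr rfl
    intro j _
    rw [consB_colNormSq, consC_colNormSq]
    simp only [hG]
    by_cases h : (j : ℕ) < n
    · rw [dif_pos h, dif_pos h]
      norm_num
    · rw [dif_neg h, dif_neg h]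
      norm_num [hf0]
  have e2 : regR f X = ∑ j ∈ range (min m n), G j := by
    rw [regR, ← Fin.sum_univ_eq_sum_range]
    apply Finset.sum_congr rfl
    intro i _
    have hin : (i : ℕ) < n := lt_of_lt_of_le i.isLt (Nat.min_le_right m n)
    simp only [hG]
    rw [dif_pos hin]
    rfl
  have e3 : ∑ j ∈ range k, G j = ∑ j ∈ range (max k n), G j := by
    apply Finset.sum_subset (Finset.range_subset_range.mpr (le_max_left _ _))
    intro j _ hnot
    rw [Finset.mem_range, not_lt] at hnot
    exact hGzero j (Or.inr hnot)
  have e4 : ∑ j ∈ range (min m n), G j = ∑ j ∈ range (max k n), G j := by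
    apply Finset.sum_subset (Finset.range_subset_range.mpr
      (le_trans (Nat.min_le_right m n) (le_max_right _ _)))
    intro j _ hnot
    rw [Finset.mem_range, not_lt] at hnot
    exact hGzero j (Or.inl hnot)
  rw [e1, e2, e3, e4]


lemma cf {m n : ℕ} (X : Matrix (Fin m) (Fin n) ℝ) {r : ℕ} (Z : Matrix (Fin m) (Fin n) ℝ)
    (hZr : Z.rank ≤ r) :
    ∃ (l : ℕ) (q : Fin l → (Fin n → ℝ)),
      (∀ i, Z *ᵥ q i = 0) ∧
      (∀ i j, i ≠ j → q i ⬝ᵥ q j = 0) ∧ (∀ i, q i ⬝ᵥ q i = 1) ∧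
      (∀ i j, i ≠ j → (X *ᵥ q i) ⬝ᵥ (X *ᵥ q j) = 0) ∧
      (∑ i ∈ univ.filter (fun i : Fin n => r ≤ (i : ℕ)), svdS X i
        ≤ ∑ i, Real.sqrt ((X *ᵥ q i) ⬝ᵥ (X *ᵥ q i))) := by
  obtain ⟨l, qb, hl, hZqb, hqb⟩ := ker_onb Z
  have hln : l ≤ n := by omega
  have hnlr : n - l ≤ r := by omega
  -- compression matrix
  set Bm : Matrix (Fin l) (Fin l) ℝ :=
    Matrix.of (fun c d => (X *ᵥ qb c) ⬝ᵥ (X *ᵥ qb d)) with hBm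
  have hherm : Bm.IsHermitian := by
    rw [Matrix.IsHermitian]
    ext c d
    simp only [Matrix.conjTranspose_apply, hBm, Matrix.of_apply, star_trivial]
    exact dotProduct_comm _ _
  set ρ := Tuple.sort (fun j => -hherm.eigenvalues j) with hρ
  set ν : Fin l → ℝ := fun c => hherm.eigenvalues (ρ c) with hν
  set wB : Fin l → Fin l → ℝ := fun c => ⇑(hherm.eigenvectorBasis (ρ c)) with hwB
  have hν_anti : Antitone ν := by
    intro a b hab
    have h := Tuple.monotone_sort (fun j => -hherm.eigenvalues j) hab
    simp only [Function.comp_apply] at h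
    have : -ν a ≤ -ν b := h
    linarith
  have hwdot : ∀ c d, wB c ⬝ᵥ wB d = if c = d then 1 else 0 := by
    intro c d
    have horth := orthonormal_iff_ite.mp hherm.eigenvectorBasis.orthonormal (ρ c) (ρ d)
    have hd : (inner ℝ (hherm.eigenvectorBasis (ρ c)) (hherm.eigenvectorBasis (ρ d)) : ℝ)
        = wB c ⬝ᵥ wB d := by
      rw [EuclideanSpace.inner_eq_star_dotProduct, dotProduct_comm]; rfl
    rw [hd] at horth
    rw [horth]
    simp [Equiv.apply_eq_iff_eq]
  have hBw : ∀ c, Bm *ᵥ wB c = ν c • wB c := fun c =>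
    hherm.mulVec_eigenvectorBasis (ρ c)
  set q : Fin l → (Fin n → ℝ) := fun i => ∑ c, wB i c • qb c with hq
  have hqbo : ∀ c d : Fin l, c ≠ d → qb c ⬝ᵥ qb d = 0 := by
    intro c d hcd; rw [hqb c d, if_neg hcd]
  have hqb1 : ∀ c : Fin l, qb c ⬝ᵥ qb c = 1 := by
    intro c; rw [hqb c c, if_pos rfl]
  -- (1) kernel
  have hZq : ∀ i, Z *ᵥ q i = 0 := by
    intro i
    show Z.mulVecLin (∑ c, wB i c • qb c) = 0
    rw [map_sum]
    apply Finset.sum_eq_zero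
    intro c _
    rw [LinearMap.map_smul]
    show wB i c • (Z *ᵥ qb c) = 0
    rw [hZqb c, smul_zero]
  -- (2) orthonormality of q
  have hq_dot : ∀ i j, q i ⬝ᵥ q j = if i = j then 1 else 0 := by
    intro i j
    rw [hq]
    simp only []
    rw [dot_ortho_expand qb hqbo]
    have : ∀ c, wB i c * wB j c * (qb c ⬝ᵥ qb c) = wB i c * wB j c := by
      intro c; rw [hqb1 c, mul_one]
    rw [Finset.sum_congr rfl (fun c _ => this c)]
    rw [← hwdot i j]
    rfl
  -- (3) X-image of q
  have hXq : ∀ i, X *ᵥ q i = ∑ c, wB i c • (X *ᵥ qb c) := by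
    intro i
    show X.mulVecLin (∑ c, wB i c • qb c) = _
    rw [map_sum]
    apply Finset.sum_congr rfl
    intro c _
    rw [LinearMap.map_smul]
    rfl
  -- (4) X-orthogonality and norms
  have hXq_dot : ∀ i j, (X *ᵥ q i) ⬝ᵥ (X *ᵥ q j) = if i = j then ν i else 0 := by
    intro i j
    rw [hXq i, hXq j]
    rw [sum_dotProduct']
    have inner1 : ∀ c, (wB i c • (X *ᵥ qb c)) ⬝ᵥ (∑ d, wB j d • (X *ᵥ qb d))
        = wB i c * (ν j * wB j c) := by
      intro c
      rw [smul_dotProduct, dotProduct_sum']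
      have : ∀ d, (X *ᵥ qb c) ⬝ᵥ (wB j d • (X *ᵥ qb d)) = Bm c d * wB j d := by
        intro d
        rw [dotProduct_smul]
        simp only [hBm, Matrix.of_apply, smul_eq_mul]
        ring
      rw [Finset.sum_congr rfl (fun d _ => this d)]
      have hmv : ∑ d, Bm c d * wB j d = (Bm *ᵥ wB j) c := rfl
      rw [smul_eq_mul, hmv, hBw j]
      simp [smul_eq_mul]
    rw [Finset.sum_congr rfl (fun c _ => inner1 c)]
    have : ∑ c, wB i c * (ν j * wB j c) = ν j * (wB i ⬝ᵥ wB j) := by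
      rw [dotProduct, Finset.mul_sum]
      apply Finset.sum_congr rfl
      intro c _
      ring
    rw [this, hwdot i j]
    by_cases hij : i = j
    · subst hij; simp
    · simp [hij]
  have hν_nonneg : ∀ i, 0 ≤ ν i := by
    intro i
    have h := hXq_dot i i
    rw [if_pos rfl] at h
    rw [← h]
    exact dot_self_nonneg _
  -- (5) interlacing
  have hinter : ∀ i : Fin l, svdLam X ⟨n - l + (i : ℕ), by omega⟩ ≤ ν i := by
    intro i
    set p : Fin n := ⟨n - l + (i : ℕ), by omega⟩ with hp
    set fam1 : {j : Fin l // i ≤ j} → (Fin n → ℝ) := fun j => q j.val with hfam1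
    set fam2 : {j : Fin n // j ≤ p} → (Fin n → ℝ) := fun j => svdV X j.val with hfam2
    have hq_orth : ∀ a b : Fin l, a ≠ b → q a ⬝ᵥ q b = 0 := by
      intro a b hab; rw [hq_dot a b, if_neg hab]
    have hq_one : ∀ a : Fin l, q a ⬝ᵥ q a = 1 := by
      intro a; rw [hq_dot a a, if_pos rfl]
    have hli_q : LinearIndependent ℝ q := linind_of_dot q hq_orth hq_one
    have hsvdV_orth : ∀ a b : Fin n, a ≠ b → svdV X a ⬝ᵥ svdV X b = 0 := by
      intro a b hab; rw [svdV_dot X a b, if_neg hab]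
    have hsvdV_one : ∀ a : Fin n, svdV X a ⬝ᵥ svdV X a = 1 := by
      intro a; rw [svdV_dot X a a, if_pos rfl]
    have hli_V : LinearIndependent ℝ (svdV X) := linind_of_dot _ hsvdV_orth hsvdV_one
    have hli1 : LinearIndependent ℝ fam1 := hli_q.comp _ Subtype.val_injective
    have hli2 : LinearIndependent ℝ fam2 := hli_V.comp _ Subtype.val_injective
    set E1 := Submodule.span ℝ (Set.range fam1) with hE1
    set E2 := Submodule.span ℝ (Set.range fam2) with hE2
    have hcard1 : Fintype.card {j : Fin l // i ≤ j} = l - (i : ℕ) := by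
      rw [Fintype.card_subtype]
      have : univ.filter (fun j : Fin l => i ≤ j) = Finset.Ici i := by
        ext j; simp [Finset.mem_Ici]
      rw [this, Fin.card_Ici]
    have hcard2 : Fintype.card {j : Fin n // j ≤ p} = n - l + (i : ℕ) + 1 := by
      rw [Fintype.card_subtype]
      have : univ.filter (fun j : Fin n => j ≤ p) = Finset.Iic p := by
        ext j; simp [Finset.mem_Iic]
      rw [this, Fin.card_Iic]
    have hfr1 : Module.finrank ℝ E1 = l - (i : ℕ) := by
      rw [hE1, finrank_span_eq_card hli1, hcard1]
    have hfr2 : Module.finrank ℝ E2 = n - l + (i : ℕ) + 1 := by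
      rw [hE2, finrank_span_eq_card hli2, hcard2]
    have hsum12 := Submodule.finrank_sup_add_finrank_inf_eq E1 E2
    have hsup : Module.finrank ℝ ↥(E1 ⊔ E2) ≤ n := by
      have h1 := Submodule.finrank_le (E1 ⊔ E2)
      have h2 : Module.finrank ℝ (Fin n → ℝ) = n := Module.finrank_fin_fun ℝ
      omega
    have hipos : 0 < Module.finrank ℝ ↥(E1 ⊓ E2) := by
      have hil : (i : ℕ) < l := i.isLt
      omega
    have hne : E1 ⊓ E2 ≠ ⊥ := by
      intro hbot
      rw [hbot, finrank_bot] at hipos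
      omega
    obtain ⟨x, hxmem, hx0⟩ := (Submodule.ne_bot_iff _).mp hne
    have hx1 : x ∈ E1 := (Submodule.mem_inf.mp hxmem).1
    have hx2 : x ∈ E2 := (Submodule.mem_inf.mp hxmem).2
    rw [hE1, Submodule.mem_span_range_iff_exists_fun] at hx1
    rw [hE2, Submodule.mem_span_range_iff_exists_fun] at hx2
    obtain ⟨cc, hcc⟩ := hx1
    obtain ⟨aa, haa⟩ := hx2
    set T := (X *ᵥ x) ⬝ᵥ (X *ᵥ x) with hT
    set s := x ⬝ᵥ x with hs
    have hspos : 0 < s := by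
      rcases lt_or_eq_of_le (dot_self_nonneg x) with h | h
      · exact h
      · exact absurd (dotProduct_self_eq_zero.mp h.symm) hx0
    -- upper bound via fam1
    have hXx1 : X *ᵥ x = ∑ j, cc j • (X *ᵥ fam1 j) := by
      rw [← hcc]
      show X.mulVecLin _ = _
      rw [map_sum]
      apply Finset.sum_congr rfl
      intro j _
      rw [LinearMap.map_smul]
      rfl
    have hupper : T ≤ ν i * s := by
      have horth1 : ∀ a b : {j : Fin l // i ≤ j}, a ≠ b →
          (X *ᵥ fam1 a) ⬝ᵥ (X *ᵥ fam1 b) = 0 := by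
        intro a b hab
        apply hXq_dot a.val b.val |>.trans
        rw [if_neg (fun h => hab (Subtype.ext h))]
      have hT1 : T = ∑ j, cc j * cc j * ((X *ᵥ fam1 j) ⬝ᵥ (X *ᵥ fam1 j)) := by
        rw [hT, hXx1]
        exact dot_ortho_expand _ horth1 cc cc
      have hs1 : s = ∑ j, cc j * cc j := by
        have horthq : ∀ a b : {j : Fin l // i ≤ j}, a ≠ b → fam1 a ⬝ᵥ fam1 b = 0 := by
          intro a b hab
          exact hq_orth a.val b.val (fun h => hab (Subtype.ext h))
        rw [hs, ← hcc, dot_ortho_expand _ horthq cc cc]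
        apply Finset.sum_congr rfl
        intro j _
        rw [hfam1]
        simp only []
        rw [hq_one j.val, mul_one]
      rw [hT1, hs1, Finset.mul_sum]
      apply Finset.sum_le_sum
      intro j _
      have hXfam : (X *ᵥ fam1 j) ⬝ᵥ (X *ᵥ fam1 j) = ν j.val := by
        rw [hfam1]
        simp only []
        rw [hXq_dot j.val j.val, if_pos rfl]
      rw [hXfam]
      have hνj : ν j.val ≤ ν i := hν_anti j.2
      nlinarith [mul_self_nonneg (cc j), hν_nonneg j.val]
    -- lower bound via fam2
    have hXx2 : X *ᵥ x = ∑ j, aa j • (X *ᵥ fam2 j) := by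
      rw [← haa]
      show X.mulVecLin _ = _
      rw [map_sum]
      apply Finset.sum_congr rfl
      intro j _
      rw [LinearMap.map_smul]
      rfl
    have hlower : svdLam X p * s ≤ T := by
      have horth2 : ∀ a b : {j : Fin n // j ≤ p}, a ≠ b →
          (X *ᵥ fam2 a) ⬝ᵥ (X *ᵥ fam2 b) = 0 := by
        intro a b hab
        apply (XV_dot X a.val b.val).trans
        rw [if_neg (fun h => hab (Subtype.ext h))]
      have hT2 : T = ∑ j, aa j * aa j * ((X *ᵥ fam2 j) ⬝ᵥ (X *ᵥ fam2 j)) := by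
        rw [hT, hXx2]
        exact dot_ortho_expand _ horth2 aa aa
      have hs2 : s = ∑ j, aa j * aa j := by
        have horthV : ∀ a b : {j : Fin n // j ≤ p}, a ≠ b → fam2 a ⬝ᵥ fam2 b = 0 := by
          intro a b hab
          exact hsvdV_orth a.val b.val (fun h => hab (Subtype.ext h))
        rw [hs, ← haa, dot_ortho_expand _ horthV aa aa]
        apply Finset.sum_congr rfl
        intro j _
        rw [hfam2]
        simp only []
        rw [hsvdV_one j.val, mul_one]
      rw [hT2, hs2, Finset.mul_sum]
      apply Finset.sum_le_sum
      intro j _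
      have hXfam : (X *ᵥ fam2 j) ⬝ᵥ (X *ᵥ fam2 j) = svdLam X j.val := by
        rw [hfam2]
        simp only []
        rw [XV_dot X j.val j.val, if_pos rfl]
      rw [hXfam]
      have hlj : svdLam X p ≤ svdLam X j.val := svdLam_anti X j.2
      nlinarith [mul_self_nonneg (aa j)]
    have : svdLam X p * s ≤ ν i * s := le_trans hlower hupper
    exact le_of_mul_le_mul_right this hspos
  -- (6) assemble
  refine ⟨l, q, hZq, fun i j hij => by rw [hq_dot i j, if_neg hij],
    fun i => by rw [hq_dot i i, if_pos rfl],
    fun i j hij => by rw [hXq_dot i j, if_neg hij], ?_⟩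
  -- sum inequality
  set g : ℕ → ℝ := fun a => if h : a < n then svdS X ⟨a, h⟩ else 0 with hg
  have step1 : ∑ i ∈ univ.filter (fun i : Fin n => r ≤ (i : ℕ)), svdS X i
      ≤ ∑ i ∈ univ.filter (fun i : Fin n => n - l ≤ (i : ℕ)), svdS X i := by
    apply Finset.sum_le_sum_of_subset_of_nonneg
    · intro j hj
      rw [Finset.mem_filter] at hj ⊢
      exact ⟨hj.1, le_trans hnlr hj.2⟩
    · intro j _ _
      exact svdS_nonneg X j
  have step2 : ∑ i ∈ univ.filter (fun i : Fin n => n - l ≤ (i : ℕ)), svdS X i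
      = ∑ c : Fin l, g (n - l + (c : ℕ)) := by
    have e1 : ∑ i ∈ univ.filter (fun i : Fin n => n - l ≤ (i : ℕ)), svdS X i
        = ∑ i : Fin n, (if n - l ≤ (i : ℕ) then svdS X i else 0) := by
      rw [Finset.sum_filter]
    have e2 : ∑ i : Fin n, (if n - l ≤ (i : ℕ) then svdS X i else 0)
        = ∑ a ∈ range n, (if n - l ≤ a then g a else 0) := by
      rw [← Fin.sum_univ_eq_sum_range]
      apply Finset.sum_congr rfl
      intro i _
      by_cases h : n - l ≤ (i : ℕ)
      · rw [if_pos h, if_pos h, hg]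
        simp only []
        rw [dif_pos i.isLt]
      · rw [if_neg h, if_neg h]
    have e3 : ∑ a ∈ range n, (if n - l ≤ a then g a else 0)
        = ∑ a ∈ Finset.Ico (n - l) n, g a := by
      rw [← Finset.sum_filter]
      congr 1
      ext a
      simp only [Finset.mem_filter, Finset.mem_range, Finset.mem_Ico]
      omega
    have e4 : ∑ a ∈ Finset.Ico (n - l) n, g a
        = ∑ a ∈ range (n - (n - l)), g (n - l + a) := by
      rw [Finset.sum_Ico_eq_sum_range]
    have e5 : n - (n - l) = l := by omega
    rw [e1, e2, e3, e4, e5, ← Fin.sum_univ_eq_sum_range]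
  have step3 : ∀ c : Fin l, g (n - l + (c : ℕ)) ≤ Real.sqrt ((X *ᵥ q c) ⬝ᵥ (X *ᵥ q c)) := by
    intro c
    have hidx : n - l + (c : ℕ) < n := by have := c.isLt; omega
    rw [hg]
    simp only []
    rw [dif_pos hidx]
    have h1 : svdS X ⟨n - l + (c : ℕ), hidx⟩ ≤ Real.sqrt (ν c) := by
      rw [svdS]
      exact Real.sqrt_le_sqrt (hinter c)
    have h2 : (X *ᵥ q c) ⬝ᵥ (X *ᵥ q c) = ν c := by
      rw [hXq_dot c c, if_pos rfl]
    rw [h2]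
    exact h1
  calc ∑ i ∈ univ.filter (fun i : Fin n => r ≤ (i : ℕ)), svdS X i
      ≤ ∑ i ∈ univ.filter (fun i : Fin n => n - l ≤ (i : ℕ)), svdS X i := step1
    _ = ∑ c : Fin l, g (n - l + (c : ℕ)) := step2
    _ ≤ ∑ c : Fin l, Real.sqrt ((X *ᵥ q c) ⬝ᵥ (X *ᵥ q c)) :=
        Finset.sum_le_sum (fun c _ => step3 c)


lemma cauchy_schwarz_sum {ι : Type*} [Fintype ι] (x y : ι → ℝ) :
    ∑ c, x c * y c ≤ Real.sqrt (∑ c, (x c)^2) * Real.sqrt (∑ c, (y c)^2) := by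
  exact Real.sum_mul_le_sqrt_mul_sqrt univ x y

lemma dot_eq_sum_sq {α : Type*} [Fintype α] (v : α → ℝ) : v ⬝ᵥ v = ∑ a, (v a)^2 := by
  rw [dotProduct]
  apply Finset.sum_congr rfl
  intro a _
  ring

lemma step1 {m n k : ℕ} (X : Matrix (Fin m) (Fin n) ℝ) (B : Matrix (Fin m) (Fin k) ℝ)
    (C : Matrix (Fin n) (Fin k) ℝ) (hBC : B * Cᵀ = X) (t : ℝ) (ht : 0 ≤ t) :
    ∑ i : Fin n, min (svdS X i) t ≤ ∑ j : Fin k, min (colNorm B j * colNorm C j) t := by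
  classical
  set e : Fin k → ℝ := fun j => colNorm B j * colNorm C j with he
  have he_nonneg : ∀ j, 0 ≤ e j := fun j =>
    mul_nonneg (Real.sqrt_nonneg _) (Real.sqrt_nonneg _)
  set S : Finset (Fin k) := univ.filter (fun j => e j ≤ t) with hS
  set Sc : Finset (Fin k) := univ.filter (fun j => ¬ e j ≤ t) with hSc
  set r : ℕ := Sc.card with hr
  set Z : Matrix (Fin m) (Fin n) ℝ :=
    (B.submatrix id (Subtype.val : {j // j ∈ Sc} → Fin k)) *
      ((C.submatrix id (Subtype.val : {j // j ∈ Sc} → Fin k)))ᵀ with hZ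
  set Y : Matrix (Fin m) (Fin n) ℝ :=
    (B.submatrix id (Subtype.val : {j // j ∈ S} → Fin k)) *
      ((C.submatrix id (Subtype.val : {j // j ∈ S} → Fin k)))ᵀ with hY
  have hZrank : Z.rank ≤ r := by
    calc Z.rank ≤ (B.submatrix id (Subtype.val : {j // j ∈ Sc} → Fin k)).rank :=
          Matrix.rank_mul_le_left _ _
      _ ≤ Fintype.card {j // j ∈ Sc} := Matrix.rank_le_card_width _
      _ = r := by rw [Fintype.card_coe]
  have hYapp : ∀ a b, Y a b = ∑ j ∈ S, B a j * C b j := by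
    intro a b
    rw [hY, Matrix.mul_apply]
    rw [← Finset.sum_coe_sort S (fun j => B a j * C b j)]
    rfl
  have hZapp : ∀ a b, Z a b = ∑ j ∈ Sc, B a j * C b j := by
    intro a b
    rw [hZ, Matrix.mul_apply]
    rw [← Finset.sum_coe_sort Sc (fun j => B a j * C b j)]
    rfl
  have hXYZ : X = Y + Z := by
    ext a b
    rw [Matrix.add_apply, hYapp, hZapp, ← hBC, Matrix.mul_apply]
    simp only [Matrix.transpose_apply]
    exact (Finset.sum_filter_add_sum_filter_not univ (fun j => e j ≤ t)
      (fun j => B a j * C b j)).symm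
  obtain ⟨l, q, hZq, hq_orth, hq_one, hXq_orth, hsum⟩ := cf X Z hZrank
  have hXYq : ∀ c, X *ᵥ q c = Y *ᵥ q c := by
    intro c
    rw [hXYZ, Matrix.add_mulVec, hZq c, add_zero]
  set p : Fin l → (Fin m → ℝ) := fun c =>
    if hc : (X *ᵥ q c) ⬝ᵥ (X *ᵥ q c) = 0 then 0
    else (Real.sqrt ((X *ᵥ q c) ⬝ᵥ (X *ᵥ q c)))⁻¹ • (X *ᵥ q c) with hp
  have hp_dot_X : ∀ c, p c ⬝ᵥ (X *ᵥ q c) = Real.sqrt ((X *ᵥ q c) ⬝ᵥ (X *ᵥ q c)) := by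
    intro c
    rw [hp]
    simp only []
    by_cases hc : (X *ᵥ q c) ⬝ᵥ (X *ᵥ q c) = 0
    · rw [dif_pos hc, hc, Real.sqrt_zero, zero_dotProduct]
    · rw [dif_neg hc, smul_dotProduct, smul_eq_mul]
      have hpos : 0 < (X *ᵥ q c) ⬝ᵥ (X *ᵥ q c) :=
        lt_of_le_of_ne (dot_self_nonneg _) (Ne.symm hc)
      have hsne : Real.sqrt ((X *ᵥ q c) ⬝ᵥ (X *ᵥ q c)) ≠ 0 := by positivity
      rw [inv_mul_eq_div, div_eq_iff hsne]
      exact (Real.mul_self_sqrt hpos.le).symm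
  have hp_orth : ∀ c d, c ≠ d → p c ⬝ᵥ p d = 0 := by
    intro c d hcd
    rw [hp]
    simp only []
    by_cases hc : (X *ᵥ q c) ⬝ᵥ (X *ᵥ q c) = 0
    · rw [dif_pos hc, zero_dotProduct]
    · by_cases hd : (X *ᵥ q d) ⬝ᵥ (X *ᵥ q d) = 0
      · rw [dif_neg hc, dif_pos hd, dotProduct_zero]
      · rw [dif_neg hc, dif_neg hd, smul_dotProduct, dotProduct_smul,
          hXq_orth c d hcd]
        simp
  have hp_self : ∀ c, p c ⬝ᵥ p c ≤ 1 := by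
    intro c
    rw [hp]
    simp only []
    by_cases hc : (X *ᵥ q c) ⬝ᵥ (X *ᵥ q c) = 0
    · rw [dif_pos hc, zero_dotProduct]; norm_num
    · rw [dif_neg hc, smul_dotProduct, dotProduct_smul]
      have hpos : 0 < (X *ᵥ q c) ⬝ᵥ (X *ᵥ q c) :=
        lt_of_le_of_ne (dot_self_nonneg _) (Ne.symm hc)
      rw [smul_eq_mul, smul_eq_mul]
      rw [show (Real.sqrt ((X *ᵥ q c) ⬝ᵥ (X *ᵥ q c)))⁻¹ *
          ((Real.sqrt ((X *ᵥ q c) ⬝ᵥ (X *ᵥ q c)))⁻¹ * ((X *ᵥ q c) ⬝ᵥ (X *ᵥ q c)))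
        = ((X *ᵥ q c) ⬝ᵥ (X *ᵥ q c)) /
          (Real.sqrt ((X *ᵥ q c) ⬝ᵥ (X *ᵥ q c)) * Real.sqrt ((X *ᵥ q c) ⬝ᵥ (X *ᵥ q c)))
        by field_simp]
      rw [Real.mul_self_sqrt hpos.le, div_self hc]
  -- the key middle bound
  have hYq_expand : ∀ c, p c ⬝ᵥ (Y *ᵥ q c)
      = ∑ j : {j // j ∈ S}, ((fun a => B a j.val) ⬝ᵥ p c) * ((fun b => C b j.val) ⬝ᵥ q c) := by
    intro c
    rw [hY, ← Matrix.mulVec_mulVec, Matrix.dotProduct_mulVec]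
    rw [dotProduct]
    apply Finset.sum_congr rfl
    intro j _
    have h1 : (p c ᵥ* B.submatrix id (Subtype.val : {j // j ∈ S} → Fin k)) j
        = (fun a => B a j.val) ⬝ᵥ p c := by
      rw [Matrix.vecMul, dotProduct_comm]
      rfl
    have h2 : ((C.submatrix id (Subtype.val : {j // j ∈ S} → Fin k))ᵀ *ᵥ q c) j
        = (fun b => C b j.val) ⬝ᵥ q c := by
      rw [Matrix.mulVec]
      rfl
    rw [h1, h2]
  have hperj : ∀ j : {j // j ∈ S},
      ∑ c, ((fun a => B a j.val) ⬝ᵥ p c) * ((fun b => C b j.val) ⬝ᵥ q c) ≤ e j.val := by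
    intro j
    have hcs := cauchy_schwarz_sum (fun c => (fun a => B a j.val) ⬝ᵥ p c)
      (fun c => (fun b => C b j.val) ⬝ᵥ q c)
    have hb1 : ∑ c, ((fun a => B a j.val) ⬝ᵥ p c)^2 ≤ colNormSq B j.val := by
      have := bessel p (fun a => B a j.val) hp_orth hp_self
      calc ∑ c, ((fun a => B a j.val) ⬝ᵥ p c)^2
          = ∑ c, (p c ⬝ᵥ (fun a => B a j.val))^2 := by
            apply Finset.sum_congr rfl; intro c _; rw [dotProduct_comm]
        _ ≤ (fun a => B a j.val) ⬝ᵥ (fun a => B a j.val) := this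
        _ = colNormSq B j.val := by rw [dot_eq_sum_sq, colNormSq]
    have hb2 : ∑ c, ((fun b => C b j.val) ⬝ᵥ q c)^2 ≤ colNormSq C j.val := by
      have := bessel q (fun b => C b j.val) hq_orth (fun c => le_of_eq (hq_one c))
      calc ∑ c, ((fun b => C b j.val) ⬝ᵥ q c)^2
          = ∑ c, (q c ⬝ᵥ (fun b => C b j.val))^2 := by
            apply Finset.sum_congr rfl; intro c _; rw [dotProduct_comm]
        _ ≤ (fun b => C b j.val) ⬝ᵥ (fun b => C b j.val) := this
        _ = colNormSq C j.val := by rw [dot_eq_sum_sq, colNormSq]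
    calc ∑ c, ((fun a => B a j.val) ⬝ᵥ p c) * ((fun b => C b j.val) ⬝ᵥ q c)
        ≤ Real.sqrt (∑ c, ((fun a => B a j.val) ⬝ᵥ p c)^2) *
          Real.sqrt (∑ c, ((fun b => C b j.val) ⬝ᵥ q c)^2) := hcs
      _ ≤ Real.sqrt (colNormSq B j.val) * Real.sqrt (colNormSq C j.val) := by
          apply mul_le_mul (Real.sqrt_le_sqrt hb1) (Real.sqrt_le_sqrt hb2)
            (Real.sqrt_nonneg _) (Real.sqrt_nonneg _)
      _ = e j.val := rfl
  have hmid : ∑ c, Real.sqrt ((X *ᵥ q c) ⬝ᵥ (X *ᵥ q c)) ≤ ∑ j ∈ S, e j := by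
    have h1 : ∑ c, Real.sqrt ((X *ᵥ q c) ⬝ᵥ (X *ᵥ q c))
        = ∑ c, p c ⬝ᵥ (Y *ᵥ q c) := by
      apply Finset.sum_congr rfl
      intro c _
      rw [← hXYq c, hp_dot_X c]
    have h2 : ∑ c, p c ⬝ᵥ (Y *ᵥ q c)
        = ∑ j : {j // j ∈ S}, ∑ c,
            ((fun a => B a j.val) ⬝ᵥ p c) * ((fun b => C b j.val) ⬝ᵥ q c) := by
      rw [Finset.sum_congr rfl (fun c _ => hYq_expand c)]
      exact Finset.sum_comm
    have h3 : ∑ j : {j // j ∈ S}, ∑ c,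
        ((fun a => B a j.val) ⬝ᵥ p c) * ((fun b => C b j.val) ⬝ᵥ q c)
        ≤ ∑ j : {j // j ∈ S}, e j.val :=
      Finset.sum_le_sum (fun j _ => hperj j)
    have h4 : ∑ j : {j // j ∈ S}, e j.val = ∑ j ∈ S, e j := Finset.sum_coe_sort S e
    rw [h1, h2, ← h4]
    exact h3
  -- left side split
  have hLHS : ∑ i : Fin n, min (svdS X i) t
      ≤ (r : ℝ) * t + ∑ i ∈ univ.filter (fun i : Fin n => r ≤ (i : ℕ)), svdS X i := by
    rw [← Finset.sum_filter_add_sum_filter_not univ (fun i : Fin n => (i : ℕ) < r)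
      (fun i => min (svdS X i) t)]
    have hpart1 : ∑ i ∈ univ.filter (fun i : Fin n => (i : ℕ) < r), min (svdS X i) t
        ≤ (r : ℝ) * t := by
      calc ∑ i ∈ univ.filter (fun i : Fin n => (i : ℕ) < r), min (svdS X i) t
          ≤ ∑ _i ∈ univ.filter (fun i : Fin n => (i : ℕ) < r), t :=
            Finset.sum_le_sum (fun i _ => min_le_right _ _)
        _ = ((univ.filter (fun i : Fin n => (i : ℕ) < r)).card : ℝ) * t := by
            rw [Finset.sum_const, nsmul_eq_mul]
        _ ≤ (r : ℝ) * t := by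
            apply mul_le_mul_of_nonneg_right _ ht
            have hcard : (univ.filter (fun i : Fin n => (i : ℕ) < r)).card ≤ r := by
              have hinj : ∀ i ∈ univ.filter (fun i : Fin n => (i : ℕ) < r),
                  (i : ℕ) ∈ Finset.range r := by
                intro i hi
                rw [Finset.mem_filter] at hi
                rw [Finset.mem_range]
                exact hi.2
              calc (univ.filter (fun i : Fin n => (i : ℕ) < r)).card
                  ≤ (Finset.range r).card := Finset.card_le_card_of_injOn
                    (fun i => (i : ℕ)) hinj (fun a _ b _ hab => Fin.ext hab)
                _ = r := Finset.card_range r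
            exact_mod_cast hcard
    have hpart2 : ∑ i ∈ univ.filter (fun i : Fin n => ¬ (i : ℕ) < r), min (svdS X i) t
        ≤ ∑ i ∈ univ.filter (fun i : Fin n => r ≤ (i : ℕ)), svdS X i := by
      have hfe : univ.filter (fun i : Fin n => ¬ (i : ℕ) < r)
          = univ.filter (fun i : Fin n => r ≤ (i : ℕ)) := by
        apply Finset.filter_congr
        intro i _
        simp [not_lt]
      rw [hfe]
      exact Finset.sum_le_sum (fun i _ => min_le_left _ _)
    linarith
  -- right side
  have hRHS : ∑ j : Fin k, min (e j) t = ∑ j ∈ S, e j + (r : ℝ) * t := by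
    rw [← Finset.sum_filter_add_sum_filter_not univ (fun j => e j ≤ t)
      (fun j => min (e j) t)]
    have h1 : ∑ j ∈ S, min (e j) t = ∑ j ∈ S, e j := by
      apply Finset.sum_congr rfl
      intro j hj
      rw [hS, Finset.mem_filter] at hj
      rw [min_eq_left hj.2]
    have h2 : ∑ j ∈ Sc, min (e j) t = (r : ℝ) * t := by
      have : ∀ j ∈ Sc, min (e j) t = t := by
        intro j hj
        rw [hSc, Finset.mem_filter] at hj
        rw [min_eq_right (le_of_lt (not_le.mp hj.2))]
      rw [Finset.sum_congr rfl this, Finset.sum_const, nsmul_eq_mul, hr]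
    rw [h1, h2]
  rw [hRHS]
  calc ∑ i : Fin n, min (svdS X i) t
      ≤ (r : ℝ) * t + ∑ i ∈ univ.filter (fun i : Fin n => r ≤ (i : ℕ)), svdS X i := hLHS
    _ ≤ (r : ℝ) * t + ∑ c, Real.sqrt ((X *ᵥ q c) ⬝ᵥ (X *ᵥ q c)) := by linarith [hsum]
    _ ≤ (r : ℝ) * t + ∑ j ∈ S, e j := by linarith [hmid]
    _ = ∑ j ∈ S, e j + (r : ℝ) * t := by ring


lemma step2 {ι κ : Type*} [Fintype ι] [Fintype κ] (f : ℝ → ℝ)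
    (hconc : ConcaveOn ℝ (Set.Ici 0) f) (hmono : MonotoneOn f (Set.Ici 0)) (hf0 : f 0 = 0)
    (s : ι → ℝ) (e : κ → ℝ) (hs : ∀ i, 0 ≤ s i) (he : ∀ j, 0 ≤ e j)
    (hmin : ∀ t, 0 ≤ t → ∑ i, min (s i) t ≤ ∑ j, min (e j) t) :
    ∑ i, f (s i) ≤ ∑ j, f (e j) := by
  classical
  set W : Finset ℝ := (Finset.image s univ ∪ Finset.image e univ).filter (fun x => 0 < x)
    with hW
  have hWpos : ∀ x ∈ W, 0 < x := by
    intro x hx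
    rw [hW, Finset.mem_filter] at hx
    exact hx.2
  have hnonneg : ∀ x ∈ insert (0:ℝ) W, 0 ≤ x := by
    intro x hx
    rcases Finset.mem_insert.mp hx with h | h
    · rw [h]
    · exact (hWpos x h).le
  have hsW : ∀ i, s i ∈ insert (0:ℝ) W := by
    intro i
    rcases eq_or_lt_of_le (hs i) with h | h
    · rw [← h]; exact Finset.mem_insert_self _ _
    · apply Finset.mem_insert_of_mem
      rw [hW, Finset.mem_filter]
      exact ⟨Finset.mem_union_left _ (Finset.mem_image_of_mem s (Finset.mem_univ i)), h⟩
  have heW : ∀ j, e j ∈ insert (0:ℝ) W := by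
    intro j
    rcases eq_or_lt_of_le (he j) with h | h
    · rw [← h]; exact Finset.mem_insert_self _ _
    · apply Finset.mem_insert_of_mem
      rw [hW, Finset.mem_filter]
      exact ⟨Finset.mem_union_right _ (Finset.mem_image_of_mem e (Finset.mem_univ j)), h⟩
  apply step2core W.card W le_rfl hWpos f hf0
  · intro x hx y hy hxy
    exact hmono (Set.mem_Ici.mpr (hnonneg x hx)) (Set.mem_Ici.mpr (hnonneg y hy)) hxy
  · intro x y z w hx hy hz hw h1 h2 h3
    exact concave_slope hconc (hnonneg x hx) h1 h2 h3
  · exact hsW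
  · exact heW
  · exact hmin

lemma regR_eq_sum_svdS {m n : ℕ} (X : Matrix (Fin m) (Fin n) ℝ) (f : ℝ → ℝ) (hf0 : f 0 = 0) :
    regR f X = ∑ i : Fin n, f (svdS X i) := by
  set G : ℕ → ℝ := fun j => if h : j < n then f (svdS X ⟨j, h⟩) else 0 with hG
  have e2 : regR f X = ∑ j ∈ range (min m n), G j := by
    rw [regR, ← Fin.sum_univ_eq_sum_range]
    apply Finset.sum_congr rfl
    intro i _
    have hin : (i : ℕ) < n := lt_of_lt_of_le i.isLt (Nat.min_le_right m n)
    simp only [hG]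
    rw [dif_pos hin]
    rfl
  have e5 : ∑ i : Fin n, f (svdS X i) = ∑ j ∈ range n, G j := by
    rw [← Fin.sum_univ_eq_sum_range]
    apply Finset.sum_congr rfl
    intro i _
    simp only [hG]
    rw [dif_pos i.isLt]
  have e4 : ∑ j ∈ range (min m n), G j = ∑ j ∈ range n, G j := by
    apply Finset.sum_subset (Finset.range_subset_range.mpr (Nat.min_le_right m n))
    intro j _ hnot
    rw [Finset.mem_range, not_lt] at hnot
    simp only [hG]
    by_cases h : j < n
    · rw [dif_pos h, svdS_eq_zero_of_rank X ⟨j, h⟩ (le_trans (rank_le_min X) hnot), hf0]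
    · rw [dif_neg h]
  rw [e2, e4, ← e5]

lemma lower_bound {m n k : ℕ} (X : Matrix (Fin m) (Fin n) ℝ) (f : ℝ → ℝ)
    (hconc : ConcaveOn ℝ (Set.Ici 0) f) (hmono : MonotoneOn f (Set.Ici 0)) (hf0 : f 0 = 0)
    (B : Matrix (Fin m) (Fin k) ℝ) (C : Matrix (Fin n) (Fin k) ℝ) (hBC : B * Cᵀ = X) :
    regR f X ≤ Rt f B C := by
  rw [regR_eq_sum_svdS X f hf0]
  have hcsq_nonneg : ∀ (j : Fin k), 0 ≤ colNormSq B j :=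
    fun j => Finset.sum_nonneg (fun a _ => sq_nonneg _)
  have hcsq_nonneg' : ∀ (j : Fin k), 0 ≤ colNormSq C j :=
    fun j => Finset.sum_nonneg (fun a _ => sq_nonneg _)
  have h1 : ∑ i : Fin n, f (svdS X i) ≤ ∑ j : Fin k, f (colNorm B j * colNorm C j) := by
    apply step2 f hconc hmono hf0
    · exact fun i => svdS_nonneg X i
    · exact fun j => mul_nonneg (Real.sqrt_nonneg _) (Real.sqrt_nonneg _)
    · exact fun t ht => step1 X B C hBC t ht
  have h2 : ∀ j : Fin k, f (colNorm B j * colNorm C j)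
      ≤ f ((colNormSq B j + colNormSq C j) / 2) := by
    intro j
    have hamgm : colNorm B j * colNorm C j ≤ (colNormSq B j + colNormSq C j) / 2 := by
      have hp := Real.sq_sqrt (hcsq_nonneg j)
      have hq := Real.sq_sqrt (hcsq_nonneg' j)
      have hd := sq_nonneg (Real.sqrt (colNormSq B j) - Real.sqrt (colNormSq C j))
      rw [colNorm, colNorm]
      nlinarith [hp, hq, hd]
    exact hmono (Set.mem_Ici.mpr (mul_nonneg (Real.sqrt_nonneg _) (Real.sqrt_nonneg _)))
      (Set.mem_Ici.mpr (by linarith [hcsq_nonneg j, hcsq_nonneg' j])) hamgm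
  calc ∑ i : Fin n, f (svdS X i)
      ≤ ∑ j : Fin k, f (colNorm B j * colNorm C j) := h1
    _ ≤ ∑ j : Fin k, f ((colNormSq B j + colNormSq C j) / 2) :=
        Finset.sum_le_sum (fun j _ => h2 j)
    _ = Rt f B C := rfl

end SVDAux

end AuxiliaryLemmas


/-- For `f` concave, non-decreasing on `[0,∞)` with `f 0 = 0`, and any
`k ≥ rank X`, `R(X)` is the attained minimum of `R̃(B,C) = Σᵢ f((‖Bᵢ‖² + ‖Cᵢ‖²)/2)`
over all factorizations `X = B Cᵀ` with `k` columns. -/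
theorem bilinear_parameterization_Rtilde {m n k : ℕ} (f : ℝ → ℝ)
    (hconc : ConcaveOn ℝ (Set.Ici 0) f) (hmono : MonotoneOn f (Set.Ici 0))
    (hf0 : f 0 = 0) (X : Matrix (Fin m) (Fin n) ℝ) (hk : X.rank ≤ k) :
    IsLeast { s : ℝ | ∃ (B : Matrix (Fin m) (Fin k) ℝ) (C : Matrix (Fin n) (Fin k) ℝ),
        B * Cᵀ = X ∧ s = Rt f B C }
      (regR f X) := by
  constructor
  · exact ⟨SVDAux.consB X k, SVDAux.consC X k, SVDAux.consB_mul X hk,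
      (SVDAux.cons_Rt X hk f hf0).symm⟩
  · rintro v ⟨B, C, hBC, rfl⟩
    exact SVDAux.lower_bound X f hconc hmono hf0 B C hBC
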